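/- Let f : ℝ → ℝ be C^{n+1} and define the almost analytic extension (without cutoff) f̃(x + iy) = Σ_{r=0}^{n} f^{(r)}(x) (iy)^r / r! for x, y ∈ ℝ. Then the Cauchy–Riemann derivative satisfies ∂̄ f̃(x+iy) := (1/2)(∂_x f̃ + i ∂_y f̃)(x+iy) = (1/2) f^{(n+1)}(x) (iy)^n / n!. In particular, if |f^{(n+1)}| ≤ M on ℝ, then |∂̄ f̃(x+iy)| ≤ (M/(2 n!)) |y|^n for all x, y. -/

import Mathlib

open Complex Finset

noncomputable def almostAnalyticExt (n : ℕ) (f : ℝ → ℝ) (x y : ℝ) : ℂ :=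
  ∑ r ∈ Finset.range (n + 1),
    ((iteratedDeriv r f x : ℝ) : ℂ) * (Complex.I * (y : ℂ)) ^ r / (Nat.factorial r : ℂ)

lemma telescope (u : ℕ → ℂ) (c : ℂ) (n : ℕ) :
    (∑ r ∈ range (n+1), u (r+1) * c^r / (Nat.factorial r : ℂ))
      + Complex.I * (∑ r ∈ range (n+1), u r * ((r:ℂ) * c^(r-1) * Complex.I) / (Nat.factorial r : ℂ))
    = u (n+1) * c^n / (Nat.factorial n : ℂ) := by
  rw [Finset.mul_sum, Finset.sum_range_succ' (fun r => Complex.I * (u r * ((r:ℂ) * c^(r-1) * Complex.I) / (Nat.factorial r : ℂ))) n]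
  have h2 : ∀ s, Complex.I * (u (s+1) * (((s:ℕ)+1:ℂ) * c^s * Complex.I) / (Nat.factorial (s+1) : ℂ))
      = -(u (s+1) * c^s / (Nat.factorial s : ℂ)) := by
    intro s
    have hs : ((s:ℂ)+1) ≠ 0 := Nat.cast_add_one_ne_zero s
    have hfac : (Nat.factorial s : ℂ) ≠ 0 := by exact_mod_cast Nat.factorial_ne_zero s
    rw [Nat.factorial_succ]
    push_cast
    field_simp
    ring_nf
    simp [Complex.I_sq]
  simp only [Nat.cast_zero, zero_mul, mul_zero, zero_div, mul_zero, add_zero]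
  rw [Finset.sum_range_succ (fun r => u (r+1) * c^r / (Nat.factorial r : ℂ)) n]
  have : ∀ s ∈ range n, Complex.I * (u (s+1) * (((s+1:ℕ):ℂ) * c^((s+1)-1) * Complex.I) / (Nat.factorial (s+1) : ℂ))
      = -(u (s+1) * c^s / (Nat.factorial s : ℂ)) := by
    intro s _
    simpa using h2 s
  rw [Finset.sum_congr rfl this, Finset.sum_neg_distrib]
  ring

theorem stmt_13 (n : ℕ) (f : ℝ → ℝ) (hf : ContDiff ℝ (n + 1 : ℕ) f) (x y : ℝ) :
    (1 / 2 : ℂ) * (deriv (fun x' : ℝ => almostAnalyticExt n f x' y) x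
        + Complex.I * deriv (fun y' : ℝ => almostAnalyticExt n f x y') y)
      = (1 / 2 : ℂ) * ((iteratedDeriv (n + 1) f x : ℝ) : ℂ) * (Complex.I * (y : ℂ)) ^ n /
          (Nat.factorial n : ℂ) ∧
    ∀ M : ℝ, (∀ t : ℝ, |iteratedDeriv (n + 1) f t| ≤ M) →
      ‖(1 / 2 : ℂ) * (deriv (fun x' : ℝ => almostAnalyticExt n f x' y) x
          + Complex.I * deriv (fun y' : ℝ => almostAnalyticExt n f x y') y)‖
        ≤ M / (2 * Nat.factorial n) * |y| ^ n := by
  have hX : HasDerivAt (fun x' : ℝ => almostAnalyticExt n f x' y)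
      (∑ r ∈ range (n+1), ((iteratedDeriv (r+1) f x : ℝ) : ℂ) * (Complex.I * (y:ℂ))^r / (Nat.factorial r : ℂ)) x := by
    apply HasDerivAt.fun_sum
    intro r hr
    have hr' : (r : WithTop ℕ∞) < ((n+1 : ℕ) : WithTop ℕ∞) := by
      exact_mod_cast Finset.mem_range.mp hr
    have hd : HasDerivAt (iteratedDeriv r f) (iteratedDeriv (r+1) f x) x := by
      rw [iteratedDeriv_succ]
      exact (hf.differentiable_iteratedDeriv r hr' x).hasDerivAt
    exact (hd.ofReal_comp.mul_const _).div_const _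
  have hY : HasDerivAt (fun y' : ℝ => almostAnalyticExt n f x y')
      (∑ r ∈ range (n+1), ((iteratedDeriv r f x : ℝ):ℂ) * ((r:ℂ) * (Complex.I*(y:ℂ))^(r-1) * Complex.I) / (Nat.factorial r : ℂ)) y := by
    apply HasDerivAt.fun_sum
    intro r hr
    have hlin : HasDerivAt (fun z : ℂ => Complex.I * z) Complex.I (y:ℂ) := by
      simpa using (hasDerivAt_id (y:ℂ)).const_mul Complex.I
    have h1 : HasDerivAt (fun z : ℂ => (Complex.I * z)^r) ((r:ℂ) * (Complex.I*(y:ℂ))^(r-1) * Complex.I) (y:ℂ) := by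
      simpa [Function.comp_def] using (hasDerivAt_pow r (Complex.I*(y:ℂ))).comp (y:ℂ) hlin
    exact ((h1.comp_ofReal.const_mul _).div_const _)
  have key := telescope (fun r => ((iteratedDeriv r f x : ℝ):ℂ)) (Complex.I * (y:ℂ)) n
  rw [hX.deriv, hY.deriv]
  constructor
  · rw [key]; ring
  · intro M hM
    rw [key]
    have hM0 : |iteratedDeriv (n+1) f x| ≤ M := hM x
    have habs : ‖(1/2:ℂ) * (((iteratedDeriv (n+1) f x : ℝ):ℂ) * (Complex.I*(y:ℂ))^n / (Nat.factorial n : ℂ))‖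
        = |iteratedDeriv (n+1) f x| * |y|^n / (2 * Nat.factorial n) := by
      simp only [norm_mul, norm_div, norm_pow, Complex.norm_I, Complex.norm_real, Real.norm_eq_abs,
        Complex.norm_natCast, norm_one, Complex.norm_two, one_mul, mul_one]
      ring
    rw [habs]
    rw [div_le_iff₀ (by positivity : (0:ℝ) < 2 * (Nat.factorial n : ℝ))]
    have : M / (2 * Nat.factorial n) * |y|^n * (2 * Nat.factorial n) = M * |y|^n := by
      field_simp
    rw [this]
    gcongr
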